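/- arXiv:2401.03278 — 2 statements merged into one kernel-verified Lean document; each statement's English description precedes it below -/
import Mathlib

section
/- For every planar rooted tree $t$ with at least one edge, every modulus $q \geq 1$, and every $a$ coprime to $q$, there exist infinitely many positive integers $n$ with $n \equiv a \pmod q$ and $t(n) = t$. -/
/-- Planar rooted trees: a tree is a root with an ordered list of subtrees. -/
inductive PTree : Type
  | node : List PTree → PTree

private lemma factorization_lt {n p : ℕ} (hp : p ∈ n.primeFactors) :
    n.factorization p < n := by
  obtain ⟨hprime, hdvd, hn⟩ := Nat.mem_primeFactors.mp hp
  calc n.factorization p < 2 ^ n.factorization p := (by first | exact Nat.lt_two_pow_self | exact Nat.lt_two_pow_self _)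
    _ ≤ p ^ n.factorization p := Nat.pow_le_pow_left hprime.two_le _
    _ ≤ n := Nat.le_of_dvd (Nat.pos_of_ne_zero hn) (Nat.ordProj_dvd n p)

/-- The planar rooted tree `t(n)` of the prime tower factorization of `n`:
the root has one child for each prime factor `p` of `n` (in increasing order),
the corresponding subtree being the tree of the exponent `ν_p(n)`. -/
def primeTower (n : ℕ) : PTree :=
  PTree.node (((n.primeFactors.sort (· ≤ ·)).attach).map
    (fun p => primeTower (n.factorization p.1)))
decreasing_by
  exact factorization_lt ((Finset.mem_sort _).mp p.2)

lemma primeTower_eq (n : ℕ) : primeTower n =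
    PTree.node ((n.primeFactors.sort (· ≤ ·)).map (fun p => primeTower (n.factorization p))) := by
  rw [primeTower]
  congr 1
  exact List.attach_map_val (f := fun p => primeTower (n.factorization p))

lemma primeTower_one : primeTower 1 = PTree.node [] := by
  rw [primeTower_eq]; simp

/-- Dirichlet wrapper. -/
lemma exists_prime_mod (q a B : ℕ) (hq : 1 ≤ q) (ha : Nat.Coprime a q) :
    ∃ p, B < p ∧ p.Prime ∧ p % q = a % q := by
  have : NeZero q := ⟨by omega⟩
  obtain ⟨p, hp1, hp2, hp3⟩ := Nat.forall_exists_prime_gt_and_eq_mod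
    ((ZMod.isUnit_iff_coprime a q).mpr ha) B
  exact ⟨p, hp1, hp2, (ZMod.natCast_eq_natCast_iff p a q).mp hp3⟩

lemma coprime_of_prime_gt {p q : ℕ} (hp : p.Prime) (hq : 1 ≤ q) (h : q < p) :
    p.Coprime q := by
  rw [Nat.Prime.coprime_iff_not_dvd hp]
  intro hdvd
  exact absurd (Nat.le_of_dvd (by omega) hdvd) (by omega)

lemma pow_mod_eq {p q e : ℕ} (hc : p.Coprime q) (he : 1 ≤ e)
    (hm : e % q.totient = 1 % q.totient) : p ^ e % q = p % q := by
  have h1 : (1 : ℕ) ≡ e [MOD q.totient] := (hm : Nat.ModEq _ e 1).symm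
  obtain ⟨k, hk⟩ := (Nat.modEq_iff_dvd' he).mp h1
  have he' : e = 1 + q.totient * k := by omega
  have : p ^ e ≡ p * 1 [MOD q] := by
    rw [he', pow_add, pow_mul, pow_one]
    exact Nat.ModEq.mul rfl (((Nat.ModEq.pow_totient hc).pow k).trans (by rw [one_pow]))
  simpa [Nat.ModEq] using this

/-- Structural step: prepending a small prime power. -/
lemma tower_step {p e m : ℕ} (hp : p.Prime) (he : 1 ≤ e) (hm : 1 ≤ m)
    (hgt : ∀ r ∈ m.primeFactors, p < r) :
    ((p ^ e * m).primeFactors.sort (· ≤ ·)).map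
        (fun r => primeTower ((p ^ e * m).factorization r))
      = primeTower e ::
        ((m.primeFactors.sort (· ≤ ·)).map (fun r => primeTower (m.factorization r))) := by
  have hpe : p ^ e ≠ 0 := pow_ne_zero _ hp.pos.ne'
  have hm0 : m ≠ 0 := by omega
  have hnotmem : p ∉ m.primeFactors := fun h => lt_irrefl p (hgt p h)
  have hfac : (p ^ e * m).primeFactors = insert p m.primeFactors := by
    rw [Nat.primeFactors_mul hpe hm0, Nat.primeFactors_prime_pow (by omega) hp]
    ext r; simp [Finset.mem_insert]
  have hsort : (p ^ e * m).primeFactors.sort (· ≤ ·) = p :: m.primeFactors.sort (· ≤ ·) := by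
    rw [hfac]
    exact Finset.sort_insert _ (fun b hb => (hgt b hb).le) hnotmem
  have hfactzn : (p ^ e).factorization = Finsupp.single p e := by
    simp [Nat.factorization_pow, hp.factorization]
  have hfp : (p ^ e * m).factorization p = e := by
    rw [Nat.factorization_mul hpe hm0]
    have : m.factorization p = 0 := by
      rw [← Nat.support_factorization] at hnotmem
      exact Finsupp.notMem_support_iff.mp hnotmem
    simp [hfactzn, this]
  rw [hsort, List.map_cons, hfp]
  congr 1
  apply List.map_congr_left
  intro r hr
  have hrmem : r ∈ m.primeFactors := (Finset.mem_sort _).mp hr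
  have hrp : r ≠ p := fun h => lt_irrefl p (h ▸ hgt r hrmem)
  rw [Nat.factorization_mul hpe hm0]
  simp [hfactzn, Finsupp.single_apply, (Ne.symm hrp)]

/-- Build a number with given children trees, all prime factors large, congruent to 1. -/
lemma buildList (l : List PTree) (q B : ℕ) (hq : 1 ≤ q)
    (H : ∀ t ∈ l, ∃ e, 1 ≤ e ∧ primeTower e = t) :
    ∃ m : ℕ, 1 ≤ m ∧ m % q = 1 % q ∧ (∀ p ∈ m.primeFactors, B < p) ∧
      (m.primeFactors.sort (· ≤ ·)).map (fun p => primeTower (m.factorization p)) = l := by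
  induction l generalizing B with
  | nil => exact ⟨1, le_refl 1, rfl, by simp, by simp⟩
  | cons t₀ rest ih =>
    obtain ⟨e, he1, he2⟩ := H t₀ (by simp)
    obtain ⟨p, hpB, hp, hpmod⟩ := exists_prime_mod q 1 (max B q) hq (Nat.coprime_one_left q)
    obtain ⟨m, hm1, hm2, hm3, hm4⟩ := ih p (fun t ht => H t (by simp [ht]))
    refine ⟨p ^ e * m, ?_, ?_, ?_, ?_⟩
    · exact Nat.one_le_iff_ne_zero.mpr (Nat.mul_ne_zero (pow_ne_zero _ hp.pos.ne') (by omega))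
    · have h1 : p ^ e ≡ 1 [MOD q] := by
        have : p ≡ 1 [MOD q] := hpmod
        simpa using this.pow e
      have := h1.mul (hm2 : m ≡ 1 [MOD q])
      exact this
    · intro r hr
      rw [Nat.primeFactors_mul (pow_ne_zero _ hp.pos.ne') (by omega),
        Nat.primeFactors_prime_pow (by omega) hp, Finset.mem_union] at hr
      rcases hr with hr | hr
      · have : r = p := by simpa using hr
        omega
      · have := hm3 r hr
        have : B < p := lt_of_le_of_lt (le_max_left B q) hpB
        omega
    · rw [tower_step hp he1 hm1 hm3, he2, hm4]

lemma mainAux : ∀ (k : ℕ) (t : PTree), sizeOf t ≤ k → t ≠ PTree.node [] →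
    ∀ q a N : ℕ, 1 ≤ q → Nat.Coprime a q →
    ∃ n : ℕ, N < n ∧ n % q = a % q ∧ primeTower n = t := by
  intro k
  induction k with
  | zero => intro t hst; cases t; simp at hst
  | succ k ih =>
    rintro ⟨l⟩ hst ht q a N hq ha
    obtain ⟨t₁, rest, rfl⟩ : ∃ t₁ rest, l = t₁ :: rest := by
      cases l with
      | nil => exact absurd rfl ht
      | cons x xs => exact ⟨x, xs, rfl⟩
    have hsize : ∀ t' ∈ t₁ :: rest, sizeOf t' ≤ k := by
      intro t' ht'
      have := List.sizeOf_lt_of_mem ht'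
      simp only [PTree.node.sizeOf_spec] at hst
      omega
    -- helper: any tree in the list can be realized with exponent ≥ 1
    have helper : ∀ t' ∈ t₁ :: rest, ∃ e, 1 ≤ e ∧ primeTower e = t' := by
      intro t' ht'
      by_cases h : t' = PTree.node []
      · exact ⟨1, le_refl 1, h ▸ primeTower_one⟩
      · obtain ⟨e, he1, _, he3⟩ := ih t' (hsize t' ht') h 1 1 0 (le_refl 1) (Nat.coprime_one_left 1)
        exact ⟨e, he1, he3⟩
    -- first exponent, congruent to 1 mod φ(q)
    have hφ : 1 ≤ q.totient := Nat.totient_pos.mpr hq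
    have helper1 : ∃ e, 1 ≤ e ∧ e % q.totient = 1 % q.totient ∧ primeTower e = t₁ := by
      by_cases h : t₁ = PTree.node []
      · exact ⟨1, le_refl 1, rfl, h ▸ primeTower_one⟩
      · obtain ⟨e, he1, he2, he3⟩ := ih t₁ (hsize t₁ (by simp)) h q.totient 1 0 hφ
          (Nat.coprime_one_left _)
        exact ⟨e, he1, he2, he3⟩
    obtain ⟨e₁, he1, he2, he3⟩ := helper1
    obtain ⟨p, hpN, hp, hpmod⟩ := exists_prime_mod q a (max N q) hq ha
    obtain ⟨m, hm1, hm2, hm3, hm4⟩ := buildList rest q p hq (fun t ht => helper t (by simp [ht]))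
    have hpq : p.Coprime q := coprime_of_prime_gt hp hq (lt_of_le_of_lt (le_max_right N q) hpN)
    refine ⟨p ^ e₁ * m, ?_, ?_, ?_⟩
    · calc N < p := lt_of_le_of_lt (le_max_left N q) hpN
        _ ≤ p ^ e₁ := Nat.le_self_pow (by omega) p
        _ ≤ p ^ e₁ * m := Nat.le_mul_of_pos_right _ (by omega)
    · have h1 : p ^ e₁ ≡ p [MOD q] := pow_mod_eq hpq he1 he2
      have h2 := (h1.mul (hm2 : m ≡ 1 [MOD q])).trans
        (Nat.ModEq.mul (hpmod : p ≡ a [MOD q]) rfl)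
      simpa [Nat.ModEq] using h2
    · rw [primeTower_eq, tower_step hp he1 hm1 hm3, he3, hm4]

/-- Dirichlet's theorem for trees: for every nontrivial planar rooted tree `t`, every
modulus `q ≥ 1`, and every `a` coprime to `q`, there are infinitely many `n` with
`n ≡ a (mod q)` and `t(n) = t`. -/
theorem stmt_10 (t : PTree) (ht : t ≠ PTree.node []) (q a : ℕ) (hq : 1 ≤ q)
    (ha : Nat.Coprime a q) (N : ℕ) :
    ∃ n : ℕ, N < n ∧ n % q = a % q ∧ primeTower n = t :=
  mainAux (sizeOf t) t (le_refl _) ht q a N hq ha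
end

section
/- For all $x \geq 2$ and $k \geq 1$, the number of positive integers $r \leq x$ whose prime-tower tree has height at least $k$ is $O(x / (2 \uparrow\uparrow k))$, with an absolute implied constant. -/
/-- `towerH n` is the height of the prime-tower tree of `n`:
`H(1) = 0` and `H(n) = 1 + max_{p ∣ n} H(ν_p(n))` for `n ≥ 2`. -/
def towerH (n : ℕ) : ℕ :=
  n.primeFactors.attach.sup (fun p => towerH (n.factorization p.1) + 1)
decreasing_by
  exact factorization_lt p.2

/-- Tetration base 2: `tet 0 = 1`, `tet (k+1) = 2 ^ tet k`. -/
def tet : ℕ → ℕ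
  | 0 => 1
  | k + 1 => 2 ^ tet k

lemma tet_pos (k : ℕ) : 1 ≤ tet k := by
  cases k with
  | zero => simp [tet]
  | succ k => exact Nat.one_le_two_pow

lemma towerH_witness {m j : ℕ} (h : j + 1 ≤ towerH m) :
    ∃ p ∈ m.primeFactors, j + 1 ≤ towerH (m.factorization p) + 1 := by
  rw [towerH] at h
  rw [Finset.le_sup_iff (by simp : (⊥ : ℕ) < j + 1)] at h
  obtain ⟨p, hp, hle⟩ := h
  exact ⟨p.1, p.2, hle⟩

lemma tet_le_of_towerH {j : ℕ} : ∀ m : ℕ, 1 ≤ m → j ≤ towerH m → tet j ≤ m := by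
  induction j with
  | zero => intro m hm _; simpa [tet] using hm
  | succ j ih =>
    intro m hm h
    obtain ⟨p, hp, hle⟩ := towerH_witness h
    obtain ⟨hprime, hdvd, hn⟩ := Nat.mem_primeFactors.mp hp
    have hν : 1 ≤ m.factorization p :=
      (Nat.Prime.factorization_pos_of_dvd hprime hn hdvd)
    have h2 : tet j ≤ m.factorization p := ih _ hν (by omega)
    calc tet (j + 1) = 2 ^ tet j := rfl
      _ ≤ p ^ tet j := Nat.pow_le_pow_left hprime.two_le _
      _ ≤ p ^ m.factorization p := Nat.pow_le_pow_right hprime.pos h2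
      _ ≤ m := Nat.le_of_dvd (by omega) (Nat.ordProj_dvd m p)

lemma sum_inv_sq : ∀ x : ℕ, 2 ≤ x →
    ∑ m ∈ Finset.Icc 3 x, (1:ℝ)/(m:ℝ)^2 ≤ 1/2 - 1/x := by
  intro x hx
  induction x, hx using Nat.le_induction with
  | base => norm_num
  | succ x hx ih =>
    have hins : Finset.Icc 3 (x+1) = insert (x+1) (Finset.Icc 3 x) := by
      ext m; simp [Nat.lt_succ_iff]; omega
    rw [hins, Finset.sum_insert (by simp)]
    have hx0 : (0:ℝ) < x := by positivity
    have hx1 : (0:ℝ) < (x:ℝ) + 1 := by positivity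
    have key : (1:ℝ)/((x:ℝ)+1)^2 ≤ 1/x - 1/((x:ℝ)+1) := by
      rw [div_sub_div _ _ (ne_of_gt hx0) (ne_of_gt hx1), div_le_div_iff₀ (by positivity) (by positivity)]
      ring_nf
      nlinarith [hx0]
    push_cast
    push_cast at ih
    linarith

lemma sum_inv_pow (t x : ℕ) (ht : 2 ≤ t) (hx : 2 ≤ x) :
    ∑ m ∈ Finset.Icc 2 x, (1:ℝ)/(m:ℝ)^t ≤ 3/(2:ℝ)^t := by
  have hins : Finset.Icc 2 x = insert 2 (Finset.Icc 3 x) := by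
    ext m; simp; omega
  rw [hins, Finset.sum_insert (by simp)]
  have h2t : (0:ℝ) < (2:ℝ)^t := by positivity
  have key : ∑ m ∈ Finset.Icc 3 x, (1:ℝ)/(m:ℝ)^t ≤
      ∑ m ∈ Finset.Icc 3 x, (4/(2:ℝ)^t) * (1/(m:ℝ)^2) := by
    apply Finset.sum_le_sum
    intro m hm
    have hm3 : 3 ≤ m := (Finset.mem_Icc.mp hm).1
    have hm0 : (0:ℝ) < (m:ℝ) := by positivity
    obtain ⟨s, rfl⟩ : ∃ s, t = s + 2 := ⟨t - 2, by omega⟩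
    have hpow : (2:ℝ)^s * (m:ℝ)^2 ≤ (m:ℝ)^(s+2) := by
      rw [pow_add]
      apply mul_le_mul_of_nonneg_right _ (by positivity)
      exact pow_le_pow_left₀ (by norm_num) (by exact_mod_cast by omega : (2:ℝ) ≤ m) s
    rw [div_mul_div_comm, div_le_div_iff₀ (by positivity) (by positivity)]
    calc (1:ℝ) * ((2:ℝ)^(s+2) * (m:ℝ)^2) = 4 * ((2:ℝ)^s * (m:ℝ)^2) := by ring
      _ ≤ 4 * (m:ℝ)^(s+2) := by linarith
      _ = 4 * 1 * (m:ℝ)^(s+2) := by ring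
  have h12 : ∑ m ∈ Finset.Icc 3 x, (1:ℝ)/(m:ℝ)^2 ≤ 1/2 := by
    have := sum_inv_sq x hx
    have : (0:ℝ) < (x:ℝ) := by positivity
    have hxx : (0:ℝ) ≤ 1/(x:ℝ) := by positivity
    linarith [sum_inv_sq x hx]
  rw [← Finset.mul_sum] at key
  have : (4/(2:ℝ)^t) * ∑ m ∈ Finset.Icc 3 x, (1/(m:ℝ)^2) ≤ (4/(2:ℝ)^t) * (1/2) := by
    apply mul_le_mul_of_nonneg_left h12 (by positivity)
  calc (1:ℝ)/(2:ℝ)^t + ∑ m ∈ Finset.Icc 3 x, (1:ℝ)/(m:ℝ)^t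
      ≤ 1/(2:ℝ)^t + (4/(2:ℝ)^t) * (1/2) := by linarith
    _ = 3/(2:ℝ)^t := by ring

/-- Uniformly in `x ≥ 2` and `k ≥ 1`, `#{r ≤ x : H(r) ≥ k} = O(x / 2↑↑k)`. -/
theorem stmt_12 : ∃ C : ℝ, ∀ x : ℕ, 2 ≤ x → ∀ k : ℕ, 1 ≤ k →
    (((Finset.Icc 1 x).filter (fun r => k ≤ towerH r)).card : ℝ) ≤ C * x / tet k := by
  use 3
  intro x hx k hk
  rcases Nat.lt_or_ge k 2 with hk2 | hk2
  · -- k = 1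
    have hk1 : k = 1 := by omega
    subst hk1
    have hcard : ((Finset.Icc 1 x).filter (fun r => 1 ≤ towerH r)).card ≤ x := by
      calc _ ≤ (Finset.Icc 1 x).card := Finset.card_filter_le _ _
        _ = x := by rw [Nat.card_Icc]; omega
    have : (tet 1 : ℝ) = 2 := by norm_num [tet]
    rw [this]
    have hxr : (0:ℝ) ≤ (x:ℝ) := by positivity
    calc (((Finset.Icc 1 x).filter (fun r => 1 ≤ towerH r)).card : ℝ) ≤ x := by
          exact_mod_cast hcard
      _ ≤ 3 * x / 2 := by linarith
  · -- k ≥ 2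
    obtain ⟨j, rfl⟩ : ∃ j, k = j + 1 := ⟨k - 1, by omega⟩
    set t := tet j with ht
    have ht2 : 2 ≤ t := by
      obtain ⟨i, rfl⟩ : ∃ i, j = i + 1 := ⟨j - 1, by omega⟩
      calc 2 = 2^1 := rfl
        _ ≤ 2^(tet i) := Nat.pow_le_pow_right (by norm_num) (tet_pos i)
        _ = tet (i+1) := rfl
    -- subset of biUnion
    have hsub : (Finset.Icc 1 x).filter (fun r => j + 1 ≤ towerH r) ⊆
        (Finset.Icc 2 x).biUnion (fun m => (Finset.Icc 1 x).filter (fun r => m ^ t ∣ r)) := by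
      intro r hr
      rw [Finset.mem_filter, Finset.mem_Icc] at hr
      obtain ⟨⟨hr1, hrx⟩, hH⟩ := hr
      obtain ⟨p, hp, hle⟩ := towerH_witness hH
      obtain ⟨hprime, hdvd, hn⟩ := Nat.mem_primeFactors.mp hp
      have hν : tet j ≤ r.factorization p := by
        have hν1 : 1 ≤ r.factorization p := Nat.Prime.factorization_pos_of_dvd hprime hn hdvd
        exact tet_le_of_towerH _ hν1 (by omega)
      rw [Finset.mem_biUnion]
      refine ⟨p, ?_, ?_⟩
      · rw [Finset.mem_Icc]
        exact ⟨hprime.two_le, le_trans (Nat.le_of_dvd (by omega) hdvd) hrx⟩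
      · rw [Finset.mem_filter, Finset.mem_Icc]
        exact ⟨⟨hr1, hrx⟩, dvd_trans (pow_dvd_pow p hν) (Nat.ordProj_dvd r p)⟩
    have hcard : ((Finset.Icc 1 x).filter (fun r => j + 1 ≤ towerH r)).card ≤
        ∑ m ∈ Finset.Icc 2 x, x / m ^ t := by
      calc _ ≤ ((Finset.Icc 2 x).biUnion
              (fun m => (Finset.Icc 1 x).filter (fun r => m ^ t ∣ r))).card :=
            Finset.card_le_card hsub
        _ ≤ ∑ m ∈ Finset.Icc 2 x, ((Finset.Icc 1 x).filter (fun r => m ^ t ∣ r)).card :=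
            Finset.card_biUnion_le
        _ = ∑ m ∈ Finset.Icc 2 x, x / m ^ t := by
            apply Finset.sum_congr rfl
            intro m _
            have : Finset.Icc 1 x = Finset.Ioc 0 x := by ext r; simp; omega
            rw [this]
            simpa using Nat.Ioc_filter_dvd_card_eq_div x (m ^ t)
    have hreal : (∑ m ∈ Finset.Icc 2 x, (x / m ^ t : ℕ) : ℝ) ≤ 3 * x / 2 ^ t := by
      push_cast
      calc ∑ m ∈ Finset.Icc 2 x, ((x / m ^ t : ℕ) : ℝ)
          ≤ ∑ m ∈ Finset.Icc 2 x, (x : ℝ) / (m : ℝ) ^ t := by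
            apply Finset.sum_le_sum
            intro m _
            calc ((x / m ^ t : ℕ) : ℝ) ≤ (x : ℝ) / ((m ^ t : ℕ) : ℝ) := Nat.cast_div_le
              _ = (x : ℝ) / (m : ℝ) ^ t := by push_cast; ring
        _ = (x : ℝ) * ∑ m ∈ Finset.Icc 2 x, (1 : ℝ) / (m : ℝ) ^ t := by
            rw [Finset.mul_sum]; apply Finset.sum_congr rfl; intros; ring
        _ ≤ (x : ℝ) * (3 / (2:ℝ) ^ t) := by
            apply mul_le_mul_of_nonneg_left (sum_inv_pow t x ht2 hx) (by positivity)
        _ = 3 * x / 2 ^ t := by ring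
    have htet : (tet (j+1) : ℝ) = (2:ℝ) ^ t := by
      show ((2 ^ tet j : ℕ) : ℝ) = _
      push_cast
      rfl
    rw [htet]
    calc (((Finset.Icc 1 x).filter (fun r => j + 1 ≤ towerH r)).card : ℝ)
        ≤ (∑ m ∈ Finset.Icc 2 x, (x / m ^ t : ℕ) : ℝ) := by exact_mod_cast hcard
      _ ≤ 3 * x / 2 ^ t := hreal
end
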